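/- Let G = G₀(u) ⋄ H(u) be a connected k-uniform hypergraph (k even) with H odd-bipartite with odd-bipartition {U, W}, u ∈ U. Then there exists a first eigenvector x of G that is nonnegative on U and nonpositive on W. -/

import Mathlib

open Finset

structure UHG (V : Type) [DecidableEq V] [Fintype V] (k : ℕ) where
  edges : Finset (Finset V)
  uniform : ∀ e ∈ edges, e.card = k

namespace UHG

variable {V : Type} [DecidableEq V] [Fintype V] {k : ℕ}

/-- The vertices of the hypergraph: all vertices covered by some edge. -/
def verts (G : UHG V k) : Finset V := G.edges.biUnion id

/-- The set of edges containing a given vertex. -/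
def incEdges (G : UHG V k) (v : V) : Finset (Finset V) :=
  G.edges.filter fun e => v ∈ e

/-- The degree of a vertex. -/
def deg (G : UHG V k) (v : V) : ℕ := (G.incEdges v).card

/-- Two vertices are adjacent if some edge contains both. -/
def Adj (G : UHG V k) (u v : V) : Prop := ∃ e ∈ G.edges, u ∈ e ∧ v ∈ e

/-- A hypergraph is connected if any two of its vertices are joined by a walk. -/
def Connected (G : UHG V k) : Prop :=
  G.verts.Nonempty ∧ ∀ u ∈ G.verts, ∀ v ∈ G.verts, Relation.ReflTransGen G.Adj u v

/-- A hypergraph is odd-bipartite if there is a set `U` of vertices such that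
every edge meets `U` in an odd number of vertices (the bipartition is `{U, V \ U}`). -/
def OddBipartite (G : UHG V k) : Prop :=
  ∃ U : Finset V, ∀ e ∈ G.edges, Odd (e ∩ U).card

/-- The signless Laplacian form `Q(G) x^k = ∑_{e ∈ E} (∑_{v∈e} x_v^k + k ∏_{v∈e} x_v)`. -/
def Qform (G : UHG V k) (x : V → ℝ) : ℝ :=
  ∑ e ∈ G.edges, ((∑ v ∈ e, x v ^ k) + (k : ℝ) * ∏ v ∈ e, x v)

/-- The H-eigenvector equation for the signless Laplacian tensor:
`(λ - d(v)) x_v^{k-1} = ∑_{e ∋ v} ∏_{w ∈ e \ {v}} x_w` for every vertex `v`. -/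
def eigenEq (G : UHG V k) (lam : ℝ) (x : V → ℝ) : Prop :=
  ∀ v : V, (lam - (G.deg v : ℝ)) * x v ^ (k - 1) =
    ∑ e ∈ G.incEdges v, ∏ w ∈ e.erase v, x w

/-- The least H-eigenvalue of the signless Laplacian tensor. -/
noncomputable def lamMin (G : UHG V k) : ℝ :=
  sInf {lam : ℝ | ∃ x : V → ℝ, x ≠ 0 ∧ G.eigenEq lam x}

/-- A first eigenvector: an H-eigenvector associated with the least H-eigenvalue. -/
def IsFirstEigenvector (G : UHG V k) (x : V → ℝ) : Prop :=
  x ≠ 0 ∧ G.eigenEq G.lamMin x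

/-- `G` is the coalescence `G₀(u) ⋄ H(u)`: its edges are the disjoint union of the
edges of `G₀` and `H`, which share only the vertex `u`. -/
def IsCoalescence (G G₀ H : UHG V k) (u : V) : Prop :=
  G.edges = G₀.edges ∪ H.edges ∧ Disjoint G₀.edges H.edges ∧
  G₀.verts ∩ H.verts ⊆ {u} ∧ u ∈ G₀.verts ∧ u ∈ H.verts

end UHG

set_option linter.unusedSectionVars false

section Aux
variable {V : Type} [DecidableEq V] [Fintype V] {k : ℕ}

noncomputable def Pj (v : V) : (V → ℝ) →L[ℝ] ℝ := ContinuousLinearMap.proj v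

lemma Pj_apply (v : V) (x : V → ℝ) : Pj v x = x v := rfl

lemma hasStrict_prod (e : Finset V) (x : V → ℝ) :
    HasStrictFDerivAt (fun y : V → ℝ => ∏ v ∈ e, y v)
      (∑ v ∈ e, (∏ w ∈ e.erase v, x w) • Pj v) x := by
  induction e using Finset.induction_on with
  | empty => simpa using hasStrictFDerivAt_const (1:ℝ) x
  | @insert a s ha ih =>
    have h1 : HasStrictFDerivAt (fun y : V → ℝ => y a * ∏ v ∈ s, y v)
        ((x a) • (∑ v ∈ s, (∏ w ∈ s.erase v, x w) • Pj v) + (∏ v ∈ s, x v) • Pj a) x :=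
      HasStrictFDerivAt.mul ((Pj a).hasStrictFDerivAt) ih
    have hfun : (fun y : V → ℝ => ∏ v ∈ insert a s, y v)
        = fun y : V → ℝ => y a * ∏ v ∈ s, y v := by
      funext y; rw [Finset.prod_insert ha]
    rw [hfun]
    convert h1 using 1
    rw [Finset.sum_insert ha, Finset.erase_insert ha, Finset.smul_sum, add_comm]
    congr 1
    refine Finset.sum_congr rfl fun v hv => ?_
    have hva : v ≠ a := fun h => ha (h ▸ hv)
    rw [Finset.erase_insert_of_ne hva.symm, Finset.prod_insert (fun h => ha (Finset.mem_of_mem_erase h)), smul_smul]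

set_option linter.unusedSectionVars false

lemma hasStrict_pow (v : V) (k : ℕ) (x : V → ℝ) :
    HasStrictFDerivAt (fun y : V → ℝ => y v ^ k) (((k : ℝ) * x v ^ (k - 1)) • Pj v) x :=
  (hasStrictDerivAt_pow k (x v)).comp_hasStrictFDerivAt x ((Pj v).hasStrictFDerivAt)

noncomputable def gderiv (x : V → ℝ) (k : ℕ) : (V → ℝ) →L[ℝ] ℝ :=
  ∑ v, ((k : ℝ) * x v ^ (k - 1)) • Pj v

lemma hasStrict_gsum (x : V → ℝ) (k : ℕ) :
    HasStrictFDerivAt (fun y : V → ℝ => ∑ v, y v ^ k) (gderiv x k) x :=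
  HasStrictFDerivAt.fun_sum fun v _ => hasStrict_pow v k x

noncomputable def Qderiv (E : Finset (Finset V)) (k : ℕ) (x : V → ℝ) : (V → ℝ) →L[ℝ] ℝ :=
  ∑ e ∈ E, ((∑ v ∈ e, ((k : ℝ) * x v ^ (k - 1)) • Pj v)
    + (k : ℝ) • ∑ v ∈ e, (∏ w ∈ e.erase v, x w) • Pj v)

lemma hasStrict_Qform (E : Finset (Finset V)) (k : ℕ) (x : V → ℝ) :
    HasStrictFDerivAt (fun y : V → ℝ => ∑ e ∈ E, ((∑ v ∈ e, y v ^ k) + (k : ℝ) * ∏ v ∈ e, y v))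
      (Qderiv E k x) x := by
  refine HasStrictFDerivAt.fun_sum fun e _ => ?_
  exact (HasStrictFDerivAt.fun_sum fun v _ => hasStrict_pow v k x).add
    ((hasStrict_prod e x).const_mul _)

lemma clm_sum_apply_single (s : Finset V) (c : V → ℝ) (v : V) :
    (∑ w ∈ s, c w • Pj w) (Pi.single v (1:ℝ)) = if v ∈ s then c v else 0 := by
  rw [ContinuousLinearMap.sum_apply]
  simp only [ContinuousLinearMap.smul_apply, Pj_apply, smul_eq_mul, Pi.single_apply]
  simp [mul_ite, Finset.sum_ite_eq' s v c]

lemma clm_sum_apply (s : Finset V) (c : V → ℝ) (y : V → ℝ) :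
    (∑ w ∈ s, c w • Pj w) y = ∑ w ∈ s, c w * y w := by
  rw [ContinuousLinearMap.sum_apply]
  simp [Pj_apply]

end Aux

namespace UHG
variable {V : Type} [DecidableEq V] [Fintype V] {k : ℕ}

lemma swap_inc (G : UHG V k) (F : V → Finset V → ℝ) :
    ∑ v, ∑ e ∈ G.incEdges v, F v e = ∑ e ∈ G.edges, ∑ v ∈ e, F v e := by
  unfold incEdges
  simp_rw [Finset.sum_filter]
  rw [Finset.sum_comm]
  refine Finset.sum_congr rfl fun e he => ?_
  rw [Finset.sum_ite_mem, Finset.univ_inter]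

lemma eigen_identity (G : UHG V k) (hk0 : 0 < k) {lam : ℝ} {x : V → ℝ}
    (h : G.eigenEq lam x) : lam * (∑ v, x v ^ k) = G.Qform x := by
  have key : ∀ v, (lam - (G.deg v : ℝ)) * x v ^ k
      = ∑ e ∈ G.incEdges v, ∏ w ∈ e, x w := by
    intro v
    have h1 : x v ^ k = x v ^ (k - 1) * x v := by
      rw [← pow_succ]; congr 1; omega
    calc (lam - (G.deg v : ℝ)) * x v ^ k
        = ((lam - (G.deg v : ℝ)) * x v ^ (k - 1)) * x v := by rw [h1]; ring
      _ = (∑ e ∈ G.incEdges v, ∏ w ∈ e.erase v, x w) * x v := by rw [h v]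
      _ = ∑ e ∈ G.incEdges v, ∏ w ∈ e, x w := by
          rw [Finset.sum_mul]
          refine Finset.sum_congr rfl fun e he => ?_
          have hv : v ∈ e := (Finset.mem_filter.mp he).2
          rw [mul_comm, Finset.mul_prod_erase e x hv]
  have hdeg : ∀ v, (G.deg v : ℝ) * x v ^ k = ∑ e ∈ G.incEdges v, x v ^ k := by
    intro v; rw [Finset.sum_const, nsmul_eq_mul]; rfl
  have hsum : ∑ v, (lam - (G.deg v : ℝ)) * x v ^ k
      = ∑ e ∈ G.edges, ∑ v ∈ e, ∏ w ∈ e, x w := by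
    rw [← swap_inc G fun v e => ∏ w ∈ e, x w]
    exact Finset.sum_congr rfl fun v _ => key v
  have lhs : ∑ v, (lam - (G.deg v : ℝ)) * x v ^ k
      = lam * (∑ v, x v ^ k) - ∑ e ∈ G.edges, ∑ v ∈ e, x v ^ k := by
    rw [← swap_inc G fun v e => x v ^ k]
    rw [Finset.mul_sum, ← Finset.sum_sub_distrib]
    refine Finset.sum_congr rfl fun v _ => ?_
    rw [← hdeg v]; ring
  have hcard : ∀ e ∈ G.edges, ∑ v ∈ e, ∏ w ∈ e, x w = (k : ℝ) * ∏ w ∈ e, x w := by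
    intro e he
    rw [Finset.sum_const, nsmul_eq_mul, G.uniform e he]
  rw [lhs] at hsum
  unfold Qform
  rw [Finset.sum_add_distrib]
  have : ∑ e ∈ G.edges, ∑ v ∈ e, ∏ w ∈ e, x w
      = ∑ e ∈ G.edges, (k : ℝ) * ∏ w ∈ e, x w := Finset.sum_congr rfl hcard
  linarith [hsum, this]

lemma Qform_smul (G : UHG V k) (t : ℝ) (x : V → ℝ) :
    G.Qform (t • x) = t ^ k * G.Qform x := by
  unfold Qform
  rw [Finset.mul_sum]
  refine Finset.sum_congr rfl fun e he => ?_
  have h1 : ∑ v ∈ e, (t • x) v ^ k = t ^ k * ∑ v ∈ e, x v ^ k := by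
    rw [Finset.mul_sum]
    refine Finset.sum_congr rfl fun v _ => ?_
    simp [mul_pow]
  have h2 : ∏ v ∈ e, (t • x) v = t ^ k * ∏ v ∈ e, x v := by
    simp only [Pi.smul_apply, smul_eq_mul]
    rw [Finset.prod_mul_distrib, Finset.prod_const, G.uniform e he]
  rw [h1, h2]; ring

end UHG

namespace UHG
variable {V : Type} [DecidableEq V] [Fintype V] {k : ℕ}

lemma minOn_eigenEq (G : UHG V k) (hk0 : 0 < k) {y : V → ℝ}
    (hy1 : ∑ v, y v ^ k = 1)
    (hmin : IsMinOn G.Qform {x : V → ℝ | ∑ v, x v ^ k = 1} y) :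
    G.eigenEq (G.Qform y) y := by
  have hQ' : HasStrictFDerivAt G.Qform (Qderiv G.edges k y) y := hasStrict_Qform G.edges k y
  have hg' : HasStrictFDerivAt (fun x : V → ℝ => ∑ v, x v ^ k) (gderiv y k) y :=
    hasStrict_gsum y k
  have hextr : IsLocalExtrOn G.Qform {x : V → ℝ | (∑ v, x v ^ k) = ∑ v, y v ^ k} y := by
    left
    have hset : {x : V → ℝ | (∑ v, x v ^ k) = ∑ v, y v ^ k}
        = {x : V → ℝ | ∑ v, x v ^ k = 1} := by rw [hy1]
    rw [hset]
    exact hmin.filter_mono inf_le_right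
  obtain ⟨a, b, hab, heq⟩ := hextr.exists_multipliers_of_hasStrictFDerivAt_1d hg' hQ'
  -- evaluate the identity at y itself to show b ≠ 0
  have happ : ∀ z : V → ℝ, a * (gderiv y k) z + b * (Qderiv G.edges k y) z = 0 := by
    intro z
    have := congrArg (fun L : (V → ℝ) →L[ℝ] ℝ => L z) heq
    simpa using this
  have hb : b ≠ 0 := by
    intro hb0
    have ha0 : a ≠ 0 := by
      intro ha0; exact hab (by simp [ha0, hb0, Prod.ext_iff])
    have h1 : (gderiv y k) y = k := by
      unfold gderiv
      rw [clm_sum_apply]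
      have : ∀ v, (k : ℝ) * y v ^ (k - 1) * y v = (k : ℝ) * y v ^ k := by
        intro v
        have : y v ^ k = y v ^ (k - 1) * y v := by rw [← pow_succ]; congr 1; omega
        rw [this]; ring
      rw [Finset.sum_congr rfl fun v _ => this v, ← Finset.mul_sum, hy1, mul_one]
    have := happ y
    rw [hb0, h1] at this
    have hk' : (k : ℝ) ≠ 0 := Nat.cast_ne_zero.mpr hk0.ne'
    simp only [zero_mul, add_zero] at this
    exact ha0 ((mul_eq_zero.mp this).resolve_right hk')
  -- pointwise equations
  have hpt : ∀ v : V, a * ((k : ℝ) * y v ^ (k - 1))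
      + b * ((G.deg v : ℝ) * ((k : ℝ) * y v ^ (k - 1))
        + (k : ℝ) * ∑ e ∈ G.incEdges v, ∏ w ∈ e.erase v, y w) = 0 := by
    intro v
    have h0 := happ (Pi.single v (1:ℝ))
    have hG : (gderiv y k) (Pi.single v (1:ℝ)) = (k : ℝ) * y v ^ (k - 1) := by
      unfold gderiv
      rw [clm_sum_apply_single]
      simp
    have hQ : (Qderiv G.edges k y) (Pi.single v (1:ℝ))
        = (G.deg v : ℝ) * ((k : ℝ) * y v ^ (k - 1))
          + (k : ℝ) * ∑ e ∈ G.incEdges v, ∏ w ∈ e.erase v, y w := by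
      unfold Qderiv
      rw [ContinuousLinearMap.sum_apply]
      have hterm : ∀ e ∈ G.edges,
          ((∑ w ∈ e, ((k : ℝ) * y w ^ (k - 1)) • Pj w)
            + (k : ℝ) • ∑ w ∈ e, (∏ z ∈ e.erase w, y z) • Pj w) (Pi.single v (1:ℝ))
          = (if v ∈ e then (k : ℝ) * y v ^ (k - 1) else 0)
            + (k : ℝ) * (if v ∈ e then ∏ z ∈ e.erase v, y z else 0) := by
        intro e he
        rw [ContinuousLinearMap.add_apply, ContinuousLinearMap.smul_apply,
          clm_sum_apply_single, clm_sum_apply_single, smul_eq_mul]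
      rw [Finset.sum_congr rfl hterm, Finset.sum_add_distrib]
      congr 1
      · simp only [Finset.sum_ite, Finset.sum_const, Finset.sum_const_zero, add_zero,
          nsmul_eq_mul, mul_zero, add_zero]
        rfl
      · rw [← Finset.mul_sum, ← Finset.sum_filter]
        rfl
    rw [hG, hQ] at h0
    exact h0
  have hk' : (k : ℝ) ≠ 0 := Nat.cast_ne_zero.mpr hk0.ne'
  set lam := -(a / b) with hlam
  have hblam : b * lam = -a := by rw [hlam]; field_simp; try ring
  have heig : G.eigenEq lam y := by
    intro v
    set p := y v ^ (k - 1) with hp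
    set S := ∑ e ∈ G.incEdges v, ∏ w ∈ e.erase v, y w with hS
    set d := (G.deg v : ℝ) with hd
    have h := hpt v
    have key : b * ((k : ℝ) * S) = (-a - b * d) * ((k : ℝ) * p) := by linear_combination h
    have hcancel : (b * (k : ℝ)) * ((lam - d) * p) = (b * (k : ℝ)) * S := by
      calc (b * (k : ℝ)) * ((lam - d) * p) = (b * lam - b * d) * ((k : ℝ) * p) := by ring
        _ = (-a - b * d) * ((k : ℝ) * p) := by rw [hblam]
        _ = b * ((k : ℝ) * S) := key.symm
        _ = (b * (k : ℝ)) * S := by ring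
    exact mul_left_cancel₀ (mul_ne_zero hb hk') hcancel
  have hid := G.eigen_identity hk0 heig
  rw [hy1, mul_one] at hid
  rw [← hid]
  exact heig

end UHG

namespace UHG
variable {V : Type} [DecidableEq V] [Fintype V] {k : ℕ}

lemma sum_pow_pos (hk : Even k) (hk0 : 0 < k) {x : V → ℝ} (hx : x ≠ 0) :
    0 < ∑ v, x v ^ k := by
  obtain ⟨v, hv⟩ : ∃ v, x v ≠ 0 := by
    by_contra h
    push_neg at h
    exact hx (funext h)
  refine Finset.sum_pos' (fun w _ => hk.pow_nonneg (x w)) ⟨v, Finset.mem_univ v, ?_⟩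
  have := hk.pow_abs (x v)
  have habs : 0 < |x v| ^ k := pow_pos (abs_pos.mpr hv) k
  linarith

lemma lamMin_eq (G : UHG V k) (hk : Even k) (hk0 : 0 < k) {y : V → ℝ}
    (hy1 : ∑ v, y v ^ k = 1)
    (hmin : IsMinOn G.Qform {x : V → ℝ | ∑ v, x v ^ k = 1} y) :
    G.lamMin = G.Qform y := by
  have hy0 : y ≠ 0 := by
    intro h
    rw [h] at hy1
    simp [zero_pow hk0.ne'] at hy1
  have hmem : G.Qform y ∈ {lam : ℝ | ∃ x : V → ℝ, x ≠ 0 ∧ G.eigenEq lam x} :=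
    ⟨y, hy0, G.minOn_eigenEq hk0 hy1 hmin⟩
  have hlb : ∀ lam ∈ {lam : ℝ | ∃ x : V → ℝ, x ≠ 0 ∧ G.eigenEq lam x},
      G.Qform y ≤ lam := by
    rintro lam ⟨x, hx0, hx⟩
    have hc : 0 < ∑ v, x v ^ k := sum_pow_pos hk hk0 hx0
    set c : ℝ := ∑ v, x v ^ k with hcdef
    set r : ℝ := c ^ ((k : ℝ))⁻¹ with hrdef
    have hr : 0 < r := Real.rpow_pos_of_pos hc _
    have hrk : r ^ k = c := by
      rw [hrdef, ← Real.rpow_natCast (c ^ ((k : ℝ))⁻¹) k, ← Real.rpow_mul hc.le,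
        inv_mul_cancel₀ (Nat.cast_ne_zero.mpr hk0.ne' : (k : ℝ) ≠ 0), Real.rpow_one]
    have hz1 : ∑ v, (r⁻¹ • x) v ^ k = 1 := by
      have : ∑ v, (r⁻¹ • x) v ^ k = r⁻¹ ^ k * c := by
        rw [hcdef, Finset.mul_sum]
        refine Finset.sum_congr rfl fun v _ => ?_
        simp [mul_pow]
      rw [this, inv_pow, hrk, inv_mul_cancel₀ hc.ne']
    have hle : G.Qform y ≤ G.Qform (r⁻¹ • x) := hmin hz1
    have hQz : G.Qform (r⁻¹ • x) = c⁻¹ * G.Qform x := by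
      rw [G.Qform_smul, inv_pow, hrk]
    have hid : lam * c = G.Qform x := G.eigen_identity hk0 hx
    rw [hQz, ← hid] at hle
    calc G.Qform y ≤ c⁻¹ * (lam * c) := hle
      _ = lam := by field_simp
  unfold lamMin
  exact le_antisymm (csInf_le ⟨G.Qform y, hlb⟩ hmem) (le_csInf ⟨G.Qform y, hmem⟩ hlb)

lemma exists_min (G : UHG V k) (hk : Even k) (hk0 : 0 < k) [Nonempty V] :
    ∃ y : V → ℝ, (∑ v, y v ^ k = 1) ∧
      IsMinOn G.Qform {x : V → ℝ | ∑ v, x v ^ k = 1} y := by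
  have gcont : Continuous fun x : V → ℝ => ∑ v, x v ^ k :=
    continuous_finset_sum _ fun v _ => (continuous_apply v).pow k
  have Qcont : Continuous G.Qform := by
    unfold Qform
    refine continuous_finset_sum _ fun e _ => Continuous.add ?_ ?_
    · exact continuous_finset_sum _ fun v _ => (continuous_apply v).pow k
    · exact continuous_const.mul (continuous_finset_prod _ fun v _ => continuous_apply v)
  set S := {x : V → ℝ | ∑ v, x v ^ k = 1} with hSdef
  have hSne : S.Nonempty := by
    refine ⟨Pi.single (Classical.arbitrary V) 1, ?_⟩
    simp only [hSdef, Set.mem_setOf_eq, Pi.single_apply, apply_ite (· ^ k), one_pow,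
      zero_pow hk0.ne']
    rw [Finset.sum_ite_eq' Finset.univ (Classical.arbitrary V) (fun _ => (1:ℝ))]
    simp
  have hclosed : IsClosed S := isClosed_eq gcont continuous_const
  have hsub : S ⊆ Metric.closedBall 0 1 := by
    intro x hx
    rw [Metric.mem_closedBall, dist_zero_right]
    rw [pi_norm_le_iff_of_nonneg zero_le_one]
    intro v
    have h1 : x v ^ k ≤ 1 := by
      rw [← hx]
      exact Finset.single_le_sum (fun w _ => hk.pow_nonneg (x w)) (Finset.mem_univ v)
    have h2 : |x v| ^ k ≤ 1 := by rw [hk.pow_abs]; exact h1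
    exact (pow_le_one_iff_of_nonneg (abs_nonneg _) hk0.ne').mp h2
  have hcomp : IsCompact S :=
    (isCompact_closedBall (0 : V → ℝ) 1).of_isClosed_subset hclosed hsub
  obtain ⟨y, hyS, hymin⟩ := hcomp.exists_isMinOn hSne Qcont.continuousOn
  exact ⟨y, hyS, hymin⟩

end UHG

/-- Let `G = G₀(u) ⋄ H(u)` be a connected `k`-uniform hypergraph (`k` even)
with `H` odd-bipartite with odd-bipartition `{U, W}`, `u ∈ U`. Then there exists a first
eigenvector of `G` that is nonnegative on `U` and nonpositive on `W`. -/
theorem stmt8 {V : Type} [DecidableEq V] [Fintype V] {k : ℕ}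
    (hk : Even k) (hk0 : 0 < k) (G G₀ H : UHG V k) (u : V)
    (hcoal : UHG.IsCoalescence G G₀ H u) (hconn : G.Connected)
    (U W : Finset V) (hUW : U ∪ W = H.verts) (hdisj : Disjoint U W) (hu : u ∈ U)
    (hodd : ∀ e ∈ H.edges, Odd (e ∩ U).card) :
    ∃ x : V → ℝ, G.IsFirstEigenvector x ∧
      (∀ v ∈ U, 0 ≤ x v) ∧ (∀ v ∈ W, x v ≤ 0) := by
  classical
  obtain ⟨⟨v₀, hv₀⟩, -⟩ := hconn
  haveI : Nonempty V := ⟨v₀⟩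
  obtain ⟨hedges, hdisjE, hinter, huG₀, huH⟩ := hcoal
  obtain ⟨y₀, hy₀1, hy₀min⟩ := G.exists_min hk hk0
  set y : V → ℝ := if 0 ≤ y₀ u then y₀ else -y₀ with hydef
  have hyu : 0 ≤ y u := by
    rw [hydef]
    by_cases h : 0 ≤ y₀ u
    · rw [if_pos h]; exact h
    · rw [if_neg h]; simp only [Pi.neg_apply]; linarith [not_le.mp h]
  have hypow : ∀ v, y v ^ k = y₀ v ^ k := by
    intro v
    rw [hydef]
    by_cases h : 0 ≤ y₀ u
    · rw [if_pos h]
    · rw [if_neg h]; simp only [Pi.neg_apply]; rw [hk.neg_pow]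
  have hy1 : ∑ v, y v ^ k = 1 := by
    rw [Finset.sum_congr rfl fun v _ => hypow v]; exact hy₀1
  have hQy : G.Qform y = G.Qform y₀ := by
    rw [hydef]
    by_cases h : 0 ≤ y₀ u
    · rw [if_pos h]
    · rw [if_neg h, ← neg_one_smul ℝ y₀, G.Qform_smul, hk.neg_one_pow, one_mul]
  have hymin : IsMinOn G.Qform {x : V → ℝ | ∑ v, x v ^ k = 1} y := by
    refine isMinOn_iff.mpr fun z hz => ?_
    rw [hQy]
    exact hy₀min hz
  set x : V → ℝ := fun v => if v ∈ W then -|y v| else if v ∈ U then |y v| else y v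
    with hxdef
  have hxpow : ∀ v, x v ^ k = y v ^ k := by
    intro v
    simp only [hxdef]
    by_cases hW : v ∈ W
    · rw [if_pos hW, hk.neg_pow, hk.pow_abs]
    · rw [if_neg hW]
      by_cases hU : v ∈ U
      · rw [if_pos hU, hk.pow_abs]
      · rw [if_neg hU]
  have hx1 : ∑ v, x v ^ k = 1 := by
    rw [Finset.sum_congr rfl fun v _ => hxpow v]; exact hy1
  have hHsub : ∀ e ∈ H.edges, ∀ v ∈ e, v ∈ H.verts := fun e he v hv =>
    Finset.mem_biUnion.mpr ⟨e, he, hv⟩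
  have hxG₀ : ∀ e ∈ G₀.edges, ∀ v ∈ e, x v = y v := by
    intro e he v hv
    have hvG₀ : v ∈ G₀.verts := Finset.mem_biUnion.mpr ⟨e, he, hv⟩
    by_cases hW : v ∈ W
    · exfalso
      have hvH : v ∈ H.verts := by rw [← hUW]; exact Finset.mem_union_right _ hW
      have hvu : v = u :=
        Finset.mem_singleton.mp (hinter (Finset.mem_inter.mpr ⟨hvG₀, hvH⟩))
      exact (Finset.disjoint_left.mp hdisj hu) (hvu ▸ hW)
    · by_cases hU : v ∈ U
      · have hvH : v ∈ H.verts := by rw [← hUW]; exact Finset.mem_union_left _ hU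
        have hvu : v = u :=
          Finset.mem_singleton.mp (hinter (Finset.mem_inter.mpr ⟨hvG₀, hvH⟩))
        simp only [hxdef]
        simp only [if_neg hW, if_pos hU]
        rw [hvu, abs_of_nonneg hyu]
      · simp only [hxdef]; simp only [if_neg hW, if_neg hU]
  have hHedge : ∀ e ∈ H.edges, ∏ v ∈ e, x v ≤ ∏ v ∈ e, y v := by
    intro e he
    have heUW : ∀ v ∈ e, v ∈ U ∪ W := fun v hv => by rw [hUW]; exact hHsub e he v hv
    have hxsplit : ∀ v ∈ e, x v = (if v ∈ W then (-1 : ℝ) else 1) * |y v| := by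
      intro v hv
      simp only [hxdef]
      by_cases hW : v ∈ W
      · rw [if_pos hW, if_pos hW]; ring
      · have hU : v ∈ U := by
          rcases Finset.mem_union.mp (heUW v hv) with h | h
          · exact h
          · exact absurd h hW
        rw [if_neg hW, if_neg hW, if_pos hU, one_mul]
    rw [Finset.prod_congr rfl hxsplit, Finset.prod_mul_distrib]
    have hcards : (e ∩ U).card + (e ∩ W).card = k := by
      have hdisj' : Disjoint (e ∩ U) (e ∩ W) :=
        Finset.disjoint_of_subset_left Finset.inter_subset_right
          (Finset.disjoint_of_subset_right Finset.inter_subset_right hdisj)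
      rw [← Finset.card_union_of_disjoint hdisj', ← Finset.inter_union_distrib_left]
      have hsub' : e ⊆ U ∪ W := fun v hv => heUW v hv
      rw [Finset.inter_eq_left.mpr hsub']
      exact H.uniform e he
    have hoddW : Odd (e ∩ W).card := by
      rcases Nat.even_or_odd (e ∩ W).card with h | h
      · exfalso
        have hkodd : Odd ((e ∩ U).card + (e ∩ W).card) := (hodd e he).add_even h
        rw [hcards] at hkodd
        exact (Nat.not_odd_iff_even.mpr hk) hkodd
      · exact h
    have hsig : ∏ v ∈ e, (if v ∈ W then (-1 : ℝ) else 1) = -1 := by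
      rw [Finset.prod_ite, Finset.prod_const, Finset.prod_const, one_pow, mul_one,
        Finset.filter_mem_eq_inter]
      exact hoddW.neg_one_pow
    rw [hsig, ← Finset.abs_prod]
    calc -1 * |∏ v ∈ e, y v| = -|∏ v ∈ e, y v| := by ring
      _ ≤ ∏ v ∈ e, y v := neg_abs_le _
  have hQle : G.Qform x ≤ G.Qform y := by
    unfold UHG.Qform
    rw [hedges, Finset.sum_union hdisjE, Finset.sum_union hdisjE]
    refine add_le_add (le_of_eq ?_) (Finset.sum_le_sum fun e he => ?_)
    · refine Finset.sum_congr rfl fun e he => ?_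
      rw [Finset.sum_congr rfl fun v hv => by rw [hxG₀ e he v hv],
        Finset.prod_congr rfl fun v hv => hxG₀ e he v hv]
    · have h1 : ∑ v ∈ e, x v ^ k = ∑ v ∈ e, y v ^ k :=
        Finset.sum_congr rfl fun v _ => hxpow v
      rw [h1]
      exact add_le_add_right
        (mul_le_mul_of_nonneg_left (hHedge e he) (Nat.cast_nonneg k)) _
  have hxmin : IsMinOn G.Qform {x : V → ℝ | ∑ v, x v ^ k = 1} x := by
    refine isMinOn_iff.mpr fun z hz => ?_
    exact le_trans hQle (hymin hz)
  have heig := G.minOn_eigenEq hk0 hx1 hxmin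
  have hlam := G.lamMin_eq hk hk0 hx1 hxmin
  refine ⟨x, ⟨?_, ?_⟩, ?_, ?_⟩
  · intro h
    rw [h] at hx1
    simp [zero_pow hk0.ne'] at hx1
  · rw [hlam]; exact heig
  · intro v hv
    have hW : v ∉ W := Finset.disjoint_left.mp hdisj hv
    simp only [hxdef]
    simp only [if_neg hW, if_pos hv]
    exact abs_nonneg _
  · intro v hv
    simp only [hxdef]
    simp only [if_pos hv]
    exact neg_nonpos.mpr (abs_nonneg _)
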